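/- Let K and L be compact metrizable spaces. If there exists a homeomorphism φ : K^ℤ → L^ℤ with φ ∘ σ_K = σ_L ∘ φ, then K is homeomorphic to L. -/

import Mathlib

/-- A bi-infinite sequence invariant under shifting by one is constant. -/
lemma shift_const {α : Type*} (z : ℤ → α) (h : ∀ m, z (m + 1) = z m) :
    ∀ m, z m = z 0 := by
  intro m
  induction m using Int.induction_on with
  | zero => rfl
  | succ n ih => rw [h]; exact ih
  | pred n ih =>
    have h2 := h (-(n : ℤ) - 1)
    rw [show (-(n : ℤ) - 1) + 1 = -n by ring] at h2
    rw [← h2]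
    exact ih

/-- If `K` and `L` are compact metrizable spaces and there is a homeomorphism
`φ : K^ℤ → L^ℤ` with `φ ∘ σ_K = σ_L ∘ φ` (where `σ` denotes the shift map),
then `K` is homeomorphic to `L`. -/
theorem stmt_2 (K L : Type*) [TopologicalSpace K] [CompactSpace K]
    [TopologicalSpace.MetrizableSpace K] [TopologicalSpace L] [CompactSpace L]
    [TopologicalSpace.MetrizableSpace L]
    (φ : (ℤ → K) ≃ₜ (ℤ → L))
    (hφ : ∀ x : ℤ → K, φ (fun m => x (m + 1)) = fun m => φ x (m + 1)) :
    Nonempty (K ≃ₜ L) := by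
  -- the inverse is also a conjugacy
  have hφ' : ∀ y : ℤ → L, φ.symm (fun m => y (m + 1)) = fun m => φ.symm y (m + 1) := by
    intro y
    have h := hφ (φ.symm y)
    rw [φ.apply_symm_apply] at h
    rw [← h, φ.symm_apply_apply]
  -- φ maps constants to constants
  have hcL : ∀ k : K, φ (fun _ => k) = fun _ => φ (fun _ => k) 0 := by
    intro k
    funext m
    apply shift_const (φ (fun _ => k))
    intro n
    have h1 : φ (fun m => (fun _ : ℤ => k) (m + 1)) = fun m => φ (fun _ => k) (m + 1) :=
      hφ (fun _ => k)
    exact (congrFun h1 n).symm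
  -- φ.symm maps constants to constants
  have hcK : ∀ l : L, φ.symm (fun _ => l) = fun _ => φ.symm (fun _ => l) 0 := by
    intro l
    funext m
    apply shift_const (φ.symm (fun _ => l))
    intro n
    have h1 : φ.symm (fun m => (fun _ : ℤ => l) (m + 1)) = fun m => φ.symm (fun _ => l) (m + 1) :=
      hφ' (fun _ => l)
    exact (congrFun h1 n).symm
  refine ⟨{ toFun := fun k => φ (fun _ => k) 0,
            invFun := fun l => φ.symm (fun _ => l) 0,
            left_inv := ?_, right_inv := ?_,
            continuous_toFun := ?_, continuous_invFun := ?_ }⟩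
  · intro k
    show φ.symm (fun _ : ℤ => φ (fun _ => k) 0) 0 = k
    rw [← hcL k, φ.symm_apply_apply]
  · intro l
    show φ (fun _ : ℤ => φ.symm (fun _ => l) 0) 0 = l
    rw [← hcK l, φ.apply_symm_apply]
  · exact (continuous_apply 0).comp (φ.continuous.comp (continuous_pi fun _ => continuous_id))
  · exact (continuous_apply 0).comp (φ.symm.continuous.comp (continuous_pi fun _ => continuous_id))
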